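/- For all natural numbers n and k, the number of lattice paths from (0,0) to (n,k) using up-steps (1,1), down-steps (1,-1) and horizontal steps (1,0), which never go below the x-axis and in which every horizontal step occurs at height 0 (i.e., goes from some (i,0) to (i+1,0)), equals the binomial coefficient C(n, ⌊(n-k)/2⌋) (interpreted as 0 when ⌊(n-k)/2⌋ < 0). -/

import Mathlib

/-- A step of a lattice path: up-step (1,1), down-step (1,-1), or horizontal step (1,0). -/
inductive Step where
  | U : Step
  | D : Step
  | H : Step
deriving DecidableEq

instance : Fintype Step where
  elems := {Step.U, Step.D, Step.H}
  complete := fun x => by cases x <;> simp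

/-- The change in the second coordinate produced by a step. -/
def stepVal : Step → ℤ
  | .U => 1
  | .D => -1
  | .H => 0

/-- The height (second coordinate) reached after performing the steps of `l`, starting at 0. -/
def hgt (l : List Step) : ℤ := (l.map stepVal).sum

def good (l : List Step) (n : ℕ) (k : ℤ) : Prop :=
  l.length = n ∧ hgt l = k ∧
    (∀ i : ℕ, 0 ≤ hgt (l.take i)) ∧
    (∀ i : ℕ, l[i]? = some Step.H → hgt (l.take i) = 0)

lemma hgt_append (a b : List Step) : hgt (a ++ b) = hgt a + hgt b := by
  simp [hgt]

lemma hgt_single (s : Step) : hgt [s] = stepVal s := by simp [hgt]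

lemma hgt_le_length (l : List Step) : hgt l ≤ l.length := by
  induction l with
  | nil => simp [hgt]
  | cons a l ih =>
    have h1 : hgt (a :: l) = stepVal a + hgt l := by simp [hgt]
    have hs : stepVal a ≤ 1 := by cases a <;> simp [stepVal]
    rw [h1]
    simp only [List.length_cons]
    push_cast
    omega

lemma good_nonneg {l : List Step} {n : ℕ} {k : ℤ} (h : good l n k) : 0 ≤ k := by
  have := h.2.2.1 l.length
  rwa [List.take_of_length_le le_rfl, h.2.1] at this

lemma good_le {l : List Step} {n : ℕ} {k : ℤ} (h : good l n k) : k ≤ (n : ℤ) := by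
  have := hgt_le_length l
  rw [h.2.1, h.1] at this
  exact this

instance good_finite (n : ℕ) (k : ℤ) : Finite {l : List Step // good l n k} := by
  apply Finite.of_injective
    (fun (l : {l : List Step // good l n k}) (i : Fin n) => l.1.get (Fin.cast l.2.1.symm i))
  intro a b h
  apply Subtype.ext
  apply List.ext_get (a.2.1.trans b.2.1.symm)
  intro i h1 h2
  have := congrFun h ⟨i, a.2.1 ▸ h1⟩
  simpa using this

lemma good_nil_iff (n : ℕ) (k : ℤ) : good [] n k ↔ n = 0 ∧ k = 0 := by
  constructor
  · rintro ⟨h1, h2, -, -⟩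
    exact ⟨by simpa using h1.symm, by simpa [hgt] using h2.symm⟩
  · rintro ⟨rfl, rfl⟩
    exact ⟨rfl, rfl, fun i => by simp [hgt], fun i hi => by simp at hi⟩

lemma good_snoc (l : List Step) (s : Step) (n : ℕ) (k : ℤ) (hk : 0 ≤ k) :
    good (l ++ [s]) (n + 1) k ↔ good l n (k - stepVal s) ∧ (s = Step.H → k = 0) := by
  constructor
  · rintro ⟨hlen, hh, hnn, hH⟩
    have hln : l.length = n := by simpa using hlen
    have hhl : hgt l = k - stepVal s := by
      rw [hgt_append, hgt_single] at hh; omega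
    have hHk : s = Step.H → k = 0 := by
      intro hs
      have h1 : (l ++ [s])[l.length]? = some Step.H := by rw [hs]; simp
      have h2 := hH l.length h1
      rw [List.take_append_of_le_length le_rfl, List.take_of_length_le le_rfl, hhl] at h2
      rw [hs] at h2
      simp [stepVal] at h2
      omega
    refine ⟨⟨hln, hhl, ?_, ?_⟩, hHk⟩
    · intro i
      rcases le_or_gt i l.length with h | h
      · have := hnn i
        rwa [List.take_append_of_le_length h] at this
      · rw [List.take_of_length_le (by omega : l.length ≤ i)]
        have := hnn l.length
        rwa [List.take_append_of_le_length le_rfl, List.take_of_length_le le_rfl] at this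
    · intro i hi
      have hi' : i < l.length := by
        by_contra hc
        push_neg at hc
        rw [List.getElem?_eq_none hc] at hi
        cases hi
      have h1 : (l ++ [s])[i]? = some Step.H := by
        rw [List.getElem?_append, if_pos hi']; exact hi
      have := hH i h1
      rwa [List.take_append_of_le_length hi'.le] at this
  · rintro ⟨⟨hln, hhl, hnn, hH⟩, hHk⟩
    refine ⟨by simp [hln], by rw [hgt_append, hgt_single]; omega, ?_, ?_⟩
    · intro i
      rcases le_or_gt i l.length with h | h
      · rw [List.take_append_of_le_length h]; exact hnn i
      · rw [List.take_of_length_le (by simp; omega : (l ++ [s]).length ≤ i),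
          hgt_append, hgt_single, hhl]
        omega
    · intro i hi
      rcases lt_trichotomy i l.length with h | h | h
      · rw [List.getElem?_append, if_pos h] at hi
        rw [List.take_append_of_le_length h.le]
        exact hH i hi
      · have hs : s = Step.H := by
          rw [h] at hi; simpa using hi
        rw [h, List.take_append_of_le_length le_rfl, List.take_of_length_le le_rfl, hhl,
          hHk hs, hs]
        simp [stepVal]
      · exfalso
        rw [List.getElem?_eq_none (by simp; omega : (l ++ [s]).length ≤ i)] at hi
        cases hi

lemma card_zero (k : ℤ) :
    Nat.card {l : List Step // good l 0 k} = if k = 0 then 1 else 0 := by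
  split_ifs with h
  · subst h
    rw [Nat.card_eq_one_iff_unique]
    constructor
    · exact ⟨fun a b => Subtype.ext
        ((List.length_eq_zero_iff.mp a.2.1).trans (List.length_eq_zero_iff.mp b.2.1).symm)⟩
    · exact ⟨⟨[], (good_nil_iff 0 0).mpr ⟨rfl, rfl⟩⟩⟩
  · haveI : IsEmpty {l : List Step // good l 0 k} := ⟨fun l => by
      have h0 : l.1 = [] := List.length_eq_zero_iff.mp l.2.1
      have := l.2.2.1
      rw [h0] at this
      exact h (by simpa [hgt] using this.symm)⟩
    exact Nat.card_of_isEmpty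

lemma card_snoc (n : ℕ) (k : ℤ) (hk : 0 ≤ k) (s₁ s₂ : Step) (hne : s₁ ≠ s₂)
    (h₁ : s₁ = Step.H → k = 0) (h₂ : s₂ = Step.H → k = 0)
    (hlast : ∀ (l : List Step) (s : Step), good (l ++ [s]) (n + 1) k → s = s₁ ∨ s = s₂) :
    Nat.card {l : List Step // good l (n + 1) k} =
      Nat.card {l : List Step // good l n (k - stepVal s₁)} +
      Nat.card {l : List Step // good l n (k - stepVal s₂)} := by
  rw [← Nat.card_sum]
  have key : ∀ (s : Step) (l : List Step), good l n (k - stepVal s) → (s = Step.H → k = 0) →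
      good (l ++ [s]) (n + 1) k :=
    fun s l hg hs => (good_snoc l s n k hk).mpr ⟨hg, hs⟩
  let F : {l : List Step // good l n (k - stepVal s₁)} ⊕ {l : List Step // good l n (k - stepVal s₂)} →
      {l : List Step // good l (n + 1) k} :=
    fun x => match x with
      | .inl l => ⟨l.1 ++ [s₁], key s₁ l.1 l.2 h₁⟩
      | .inr l => ⟨l.1 ++ [s₂], key s₂ l.1 l.2 h₂⟩
  refine (Nat.card_eq_of_bijective F ⟨?_, ?_⟩).symm
  · rintro (a | a) (b | b) h <;> simp only [F, Subtype.mk.injEq] at h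
    · have := List.append_inj' h rfl
      exact congrArg Sum.inl (Subtype.ext this.1)
    · have := List.append_inj' h rfl
      exact absurd (by simpa using this.2) hne
    · have := List.append_inj' h rfl
      have h2 : s₂ = s₁ := by simpa using this.2
      exact absurd h2.symm hne
    · have := List.append_inj' h rfl
      exact congrArg Sum.inr (Subtype.ext this.1)
  · rintro ⟨l, hl⟩
    have hne' : l ≠ [] := by
      intro h
      subst h
      have := ((good_nil_iff _ _).mp hl).1
      omega
    obtain ⟨l', s, rfl⟩ : ∃ l' s, l = l' ++ [s] :=
      ⟨l.dropLast, l.getLast hne', (List.dropLast_append_getLast hne').symm⟩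
    have hg := (good_snoc l' s n k hk).mp hl
    rcases hlast l' s hl with rfl | rfl
    · exact ⟨.inl ⟨l', hg.1⟩, rfl⟩
    · exact ⟨.inr ⟨l', hg.1⟩, rfl⟩

lemma card_pos (n : ℕ) (k : ℤ) (hk : 1 ≤ k) :
    Nat.card {l : List Step // good l (n + 1) k} =
      Nat.card {l : List Step // good l n (k - 1)} +
      Nat.card {l : List Step // good l n (k + 1)} := by
  have h := card_snoc n k (by omega) Step.U Step.D (by simp)
    (by simp) (by simp) ?_
  · simpa [stepVal, sub_neg_eq_add] using h
  · intro l s hg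
    have h := (good_snoc l s n k (by omega)).mp hg
    cases s
    · exact Or.inl rfl
    · exact Or.inr rfl
    · exact absurd (h.2 rfl) (by omega)

lemma card_zrec (n : ℕ) :
    Nat.card {l : List Step // good l (n + 1) 0} =
      Nat.card {l : List Step // good l n 1} +
      Nat.card {l : List Step // good l n 0} := by
  have h := card_snoc n 0 le_rfl Step.D Step.H (by simp)
    (by simp) (fun _ => rfl) ?_
  · simpa [stepVal, sub_neg_eq_add] using h
  · intro l s hg
    have h := (good_snoc l s n 0 le_rfl).mp hg
    cases s
    · exfalso
      have := good_nonneg h.1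
      simp [stepVal] at this
    · exact Or.inl rfl
    · exact Or.inr rfl

lemma choose_half (n : ℕ) (hn : 1 ≤ n) :
    (n + 1).choose ((n + 1) / 2) = n.choose ((n - 1) / 2) + n.choose (n / 2) := by
  rcases Nat.even_or_odd n with ⟨m, hm⟩ | ⟨m, hm⟩
  · obtain ⟨m', rfl⟩ : ∃ m', m = m' + 1 := ⟨m - 1, by omega⟩
    subst hm
    have e1 : (m' + 1 + (m' + 1) + 1) / 2 = m' + 1 := by omega
    have e2 : (m' + 1 + (m' + 1) - 1) / 2 = m' := by omega
    have e3 : (m' + 1 + (m' + 1)) / 2 = m' + 1 := by omega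
    rw [e1, e2, e3]
    exact Nat.choose_succ_succ _ _
  · subst hm
    have e1 : (2 * m + 1 + 1) / 2 = m + 1 := by omega
    have e2 : (2 * m + 1 - 1) / 2 = m := by omega
    have e3 : (2 * m + 1) / 2 = m := by omega
    rw [e1, e2, e3]
    have hp : (2 * m + 1 + 1).choose (m + 1) =
        (2 * m + 1).choose m + (2 * m + 1).choose (m + 1) := Nat.choose_succ_succ _ _
    have hs : (2 * m + 1).choose (m + 1) = (2 * m + 1).choose m := by
      have := Nat.choose_symm (show m ≤ 2 * m + 1 by omega)
      rwa [show 2 * m + 1 - m = m + 1 by omega] at this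
    omega

lemma main_card (n : ℕ) : ∀ k : ℤ,
    Nat.card {l : List Step // good l n k} =
      if 0 ≤ k ∧ k ≤ (n : ℤ) then n.choose (((n : ℤ) - k).toNat / 2) else 0 := by
  induction n with
  | zero =>
    intro k
    rw [card_zero]
    by_cases h : k = 0
    · subst h; norm_num
    · rw [if_neg h, if_neg (by push_cast; omega)]
  | succ n ih =>
    intro k
    by_cases hk0 : 0 ≤ k
    swap
    · haveI : IsEmpty {l : List Step // good l (n + 1) k} :=
        ⟨fun l => hk0 (good_nonneg l.2)⟩
      rw [Nat.card_of_isEmpty, if_neg (by omega)]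
    by_cases hkn : k ≤ (n : ℤ) + 1
    swap
    · haveI : IsEmpty {l : List Step // good l (n + 1) k} :=
        ⟨fun l => hkn (by have := good_le l.2; push_cast at this ⊢; omega)⟩
      rw [Nat.card_of_isEmpty, if_neg (by push_cast; omega)]
    rw [if_pos (by push_cast; omega)]
    rcases eq_or_lt_of_le hk0 with hk | hk1
    · -- k = 0
      rw [← hk, card_zrec, ih 1, ih 0]
      rcases Nat.eq_zero_or_pos n with rfl | hn
      · norm_num
      rw [if_pos (by omega : (0:ℤ) ≤ 1 ∧ (1:ℤ) ≤ (n:ℤ)),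
        if_pos (by omega : (0:ℤ) ≤ 0 ∧ (0:ℤ) ≤ (n:ℤ))]
      have e0 : ((((n:ℕ) + 1 : ℕ) : ℤ) - 0).toNat = n + 1 := by omega
      have e1 : (((n:ℕ) : ℤ) - 1).toNat = n - 1 := by omega
      have e2 : (((n:ℕ) : ℤ) - 0).toNat = n := by omega
      rw [e0, e1, e2]
      exact (choose_half n hn).symm
    · -- 1 ≤ k
      rw [card_pos n k (by omega), ih (k - 1), ih (k + 1)]
      rw [if_pos (by omega : (0:ℤ) ≤ k - 1 ∧ k - 1 ≤ (n:ℤ))]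
      set j : ℕ := (((n : ℤ) + 1) - k).toNat with hj
      have hj1 : ((n : ℤ) - (k - 1)).toNat = j := by omega
      have hjg : (((n : ℤ) + 1) - k).toNat = j := rfl
      rw [hj1]
      push_cast
      rw [hjg]
      by_cases hkn' : 0 ≤ k + 1 ∧ k + 1 ≤ (n : ℤ)
      · rw [if_pos hkn']
        have hj2 : ((n : ℤ) - (k + 1)).toNat = j - 2 := by omega
        have hjge : 2 ≤ j := by omega
        rw [hj2]
        have e1 : (j - 2) / 2 = j / 2 - 1 := by omega
        have e2 : j / 2 - 1 + 1 = j / 2 := by omega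
        have hp := Nat.choose_succ_succ n (j / 2 - 1)
        simp only [Nat.succ_eq_add_one] at hp
        rw [e2] at hp
        rw [e1]
        omega
      · rw [if_neg hkn']
        have hj' : j ≤ 1 := by omega
        have : j / 2 = 0 := by omega
        rw [this]
        simp
  
/-- The number of lattice paths from `(0,0)` to `(n,k)` with up-, down- and horizontal steps,
never going below the x-axis and with all horizontal steps at height `0`, is
`C(n, ⌊(n-k)/2⌋)`, interpreted as `0` when `⌊(n-k)/2⌋ < 0`, i.e. when `k > n`. -/
theorem stmt0 (n k : ℕ) :
    Nat.card {l : List Step //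
      l.length = n ∧ hgt l = k ∧
      (∀ i : ℕ, 0 ≤ hgt (l.take i)) ∧
      (∀ i : ℕ, l[i]? = some Step.H → hgt (l.take i) = 0)}
    = if k ≤ n then n.choose ((n - k) / 2) else 0 := by
  have h : {l : List Step //
      l.length = n ∧ hgt l = k ∧
      (∀ i : ℕ, 0 ≤ hgt (l.take i)) ∧
      (∀ i : ℕ, l[i]? = some Step.H → hgt (l.take i) = 0)} =
      {l : List Step // good l n (k : ℤ)} := rfl
  rw [h, main_card n (k : ℤ)]
  by_cases hkn : k ≤ n
  · rw [if_pos (by omega), if_pos hkn]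
    congr 1
    omega
  · rw [if_neg (by omega), if_neg hkn]
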